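/- Let a and b be real numbers and for integers n ≥ 3 define v_n(a,b) = (∑_{k=1}^{n−2} 1/k) + (a·n+b)/(n(n−1)) − ln n. Then lim_{n→∞} n²·(v_n(a,b) − v_{n+1}(a,b)) = a − 3/2. -/

import Mathlib

open Filter Topology

noncomputable def v (a b : ℝ) (n : ℕ) : ℝ :=
  (∑ k ∈ Finset.Icc 1 (n - 2), (1 : ℝ) / k) + (a * n + b) / ((n : ℝ) * ((n : ℝ) - 1))
    - Real.log n

lemma log_part_tendsto :
    Tendsto (fun n : ℕ => (n : ℝ) ^ 2 * Real.log (1 + 1 / n) - n + 1 / 2) atTop (𝓝 0) := by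
  have hbound : ∀ n : ℕ, 2 ≤ n →
      |(n : ℝ) ^ 2 * Real.log (1 + 1 / n) - n + 1 / 2| ≤ 1 / ((n : ℝ) - 1) := by
    intro n hn
    have hn0 : (0 : ℝ) < n := by positivity
    have hn2 : (2 : ℝ) ≤ n := by exact_mod_cast hn
    have hx : |(-(1 / (n : ℝ)))| < 1 := by
      rw [abs_neg, abs_of_pos (by positivity)]
      rw [div_lt_one hn0]; linarith
    have key := Real.abs_log_sub_add_sum_range_le hx 2
    have hsum : (∑ i ∈ Finset.range 2, (-(1 / (n : ℝ))) ^ (i + 1) / (i + 1))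
        = -(1 / n) + 1 / (2 * n ^ 2) := by
      simp [Finset.sum_range_succ]
      ring
    rw [hsum] at key
    have hlog : Real.log (1 - (-(1 / (n : ℝ)))) = Real.log (1 + 1 / n) := by ring_nf
    rw [hlog] at key
    have habs : |(-(1 / (n : ℝ)))| = 1 / n := by
      rw [abs_neg, abs_of_pos (by positivity)]
    rw [habs] at key
    -- key : |(-(1/n) + 1/(2n²)) + log(1+1/n)| ≤ (1/n)^3 / (1 - 1/n)
    have hmul : |(n : ℝ) ^ 2 * Real.log (1 + 1 / n) - n + 1 / 2|
        = (n : ℝ) ^ 2 * |(-(1 / n) + 1 / (2 * n ^ 2)) + Real.log (1 + 1 / n)| := by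
      rw [← abs_of_pos (show (0:ℝ) < (n:ℝ)^2 by positivity), ← abs_mul]
      congr 1
      field_simp
      rw [abs_of_pos (show (0:ℝ) < (n:ℝ)^2 by positivity)]
      ring
    rw [hmul]
    have h3 : 1 - 1 / (n : ℝ) ≠ 0 := by
      have : (1 : ℝ) / n < 1 := by rw [div_lt_one hn0]; linarith
      linarith
    have hne1 : (n : ℝ) - 1 ≠ 0 := by linarith
    have hrhs : (n : ℝ) ^ 2 * ((1 / n) ^ 3 / (1 - 1 / n)) = 1 / ((n : ℝ) - 1) := by
      field_simp
    calc (n : ℝ) ^ 2 * |(-(1 / n) + 1 / (2 * n ^ 2)) + Real.log (1 + 1 / n)|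
        ≤ (n : ℝ) ^ 2 * ((1 / n) ^ 3 / (1 - 1 / n)) := by
          exact mul_le_mul_of_nonneg_left key (by positivity)
      _ = 1 / ((n : ℝ) - 1) := hrhs
  have hto : Tendsto (fun n : ℕ => 1 / ((n : ℝ) - 1)) atTop (𝓝 0) := by
    simp only [one_div]
    exact tendsto_inv_atTop_zero.comp
      (tendsto_atTop_add_const_right _ _ tendsto_natCast_atTop_atTop)
  refine squeeze_zero_norm' ?_ hto
  filter_upwards [eventually_ge_atTop 2] with n hn
  exact hbound n hn

lemma rat_part_tendsto (a b : ℝ) :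
    Tendsto (fun n : ℕ =>
      ((2 * a - 3) * n ^ 2 + (2 * a + 4 * b - 2) * n + 1) / (2 * ((n : ℝ) ^ 2 - 1)))
      atTop (𝓝 (a - 3 / 2)) := by
  have h1 : Tendsto (fun n : ℕ => 1 / (n : ℝ)) atTop (𝓝 0) :=
    tendsto_one_div_atTop_nhds_zero_nat
  have hmain : Tendsto (fun n : ℕ =>
      ((2 * a - 3) + (2 * a + 4 * b - 2) * (1 / n) + (1 / n) ^ 2) / (2 * (1 - (1 / (n : ℝ)) ^ 2)))
      atTop (𝓝 (a - 3 / 2)) := by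
    have hc : ContinuousAt (fun x : ℝ =>
        ((2 * a - 3) + (2 * a + 4 * b - 2) * x + x ^ 2) / (2 * (1 - x ^ 2))) 0 := by
      apply ContinuousAt.div
      · fun_prop
      · fun_prop
      · norm_num
    have h0 : ((2 * a - 3) + (2 * a + 4 * b - 2) * (0:ℝ) + (0:ℝ) ^ 2) / (2 * (1 - (0:ℝ) ^ 2))
        = a - 3 / 2 := by norm_num; ring
    have := hc.tendsto
    rw [h0] at this
    exact this.comp h1
  refine hmain.congr' ?_
  filter_upwards [eventually_ge_atTop 2] with n hn
  have hn0 : (0 : ℝ) < n := by positivity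
  have hn2 : (2 : ℝ) ≤ n := by exact_mod_cast hn
  have hne : (n : ℝ) ≠ 0 := hn0.ne'
  have h1 : (n : ℝ) ^ 2 - 1 ≠ 0 := by nlinarith
  have h2 : 1 - (1 / (n : ℝ)) ^ 2 ≠ 0 := by
    have : (1 : ℝ) / n < 1 := by rw [div_lt_one hn0]; linarith
    have h0 : (0:ℝ) ≤ 1/(n:ℝ) := by positivity
    nlinarith
  field_simp

theorem diff_rate (a b : ℝ) :
    Tendsto (fun n : ℕ => (n : ℝ) ^ 2 * (v a b n - v a b (n + 1))) atTop
      (𝓝 (a - 3 / 2)) := by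
  have hA := rat_part_tendsto a b
  have hB := log_part_tendsto
  have := hA.add hB
  rw [add_zero] at this
  refine this.congr' ?_
  filter_upwards [eventually_ge_atTop 3] with n hn
  have hn0 : (0 : ℝ) < n := by positivity
  have hn3 : (3 : ℝ) ≤ n := by exact_mod_cast hn
  have hne : (n : ℝ) ≠ 0 := hn0.ne'
  have hne1 : (n : ℝ) - 1 ≠ 0 := by linarith
  have hne2 : (n : ℝ) + 1 ≠ 0 := by linarith
  -- sum difference
  have hsum : (∑ k ∈ Finset.Icc 1 (n - 1), (1 : ℝ) / k)
      = (∑ k ∈ Finset.Icc 1 (n - 2), (1 : ℝ) / k) + 1 / ((n : ℝ) - 1) := by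
    have h1 : n - 1 = (n - 2) + 1 := by omega
    have h2 : 1 ≤ (n - 2) + 1 := by omega
    rw [h1, Finset.sum_Icc_succ_top h2]
    have h3 : ((n - 2 + 1 : ℕ) : ℝ) = (n : ℝ) - 1 := by
      have : (n - 2 + 1 : ℕ) = n - 1 := by omega
      rw [this]
      have : (1:ℕ) ≤ n := by omega
      push_cast [this]
      ring
    rw [h3]
  have hlog : Real.log ((n : ℕ) + 1 : ℝ) - Real.log n = Real.log (1 + 1 / n) := by
    rw [← Real.log_div (by linarith) hne]
    congr 1
    field_simp
  simp only [v]
  push_cast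
  rw [hsum]
  have expand : (n : ℝ) ^ 2 * ((∑ k ∈ Finset.Icc 1 (n - 2), (1 : ℝ) / k +
        (a * n + b) / ((n : ℝ) * ((n : ℝ) - 1)) - Real.log n) -
      ((∑ k ∈ Finset.Icc 1 (n - 2), (1 : ℝ) / k) + 1 / ((n : ℝ) - 1) +
        (a * ((n : ℝ) + 1) + b) / (((n : ℝ) + 1) * (((n : ℝ) + 1) - 1)) -
        Real.log ((n : ℝ) + 1)))
      = (n : ℝ) ^ 2 * (- (1 / ((n : ℝ) - 1)) + (a * n + b) / ((n : ℝ) * ((n : ℝ) - 1))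
          - (a * ((n : ℝ) + 1) + b) / (((n : ℝ) + 1) * (n : ℝ)))
        + (n : ℝ) ^ 2 * (Real.log ((n : ℝ) + 1) - Real.log n) := by
    ring
  rw [expand, hlog]
  have hrat : (n : ℝ) ^ 2 * (- (1 / ((n : ℝ) - 1)) + (a * n + b) / ((n : ℝ) * ((n : ℝ) - 1))
        - (a * ((n : ℝ) + 1) + b) / (((n : ℝ) + 1) * (n : ℝ)))
      = ((2 * a - 3) * n ^ 2 + (2 * a + 4 * b - 2) * n + 1) / (2 * ((n : ℝ) ^ 2 - 1))
        - (n : ℝ) + 1 / 2 := by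
    have h12 : (n : ℝ) ^ 2 - 1 ≠ 0 := by nlinarith
    field_simp
    ring
  rw [hrat]
  ring
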